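/- Asymptotic optimality (limit computation): for fixed q >= 2, consider sequences of finite sets R of places with all data as in the genus and supersingular point formulas with o of degree 1. Let S(R) = (1/(q^2-1)) prod_{x in R}(q^{d_x}-1)(q-1) + (q/(q+1)) 2^{#R} wp(R union o) and g(R) = 1 + (1/(q^2-1))(prod_{x in R}(q^{d_x}-1) - q(q-1)2^{#R-1} wp(R)). Then as deg(r) = sum_{x in R} d_x tends to infinity, S(R)/g(R) tends to q - 1. -/

import Mathlib

open Filter

/-- ℕ inequality: `2^(d-2) + 1 ≤ 2^d` for `d ≥ 1`. -/
lemma ssgt_aux_pow (d : ℕ) (hd : 1 ≤ d) : 2 ^ (d - 2) + 1 ≤ 2 ^ d := by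
  rcases d with _ | _ | d
  · omega
  · simp
  · have h : 2 ^ d < 2 ^ (d + 2) := Nat.pow_lt_pow_right (by norm_num) (by omega)
    simpa using h

/-- Per-factor bound in ℚ. -/
lemma ssgt_aux_factor (q d : ℕ) (hq : 2 ≤ q) (hd : 1 ≤ d) :
    (2 : ℚ) ^ (d - 2) ≤ (q : ℚ) ^ d - 1 := by
  have h1 : ((2 : ℕ) : ℚ) ^ d ≤ (q : ℚ) ^ d := by
    apply pow_le_pow_left₀ (by norm_num)
    exact_mod_cast hq
  have h2 : ((2 : ℚ)) ^ (d - 2) + 1 ≤ (2 : ℚ) ^ d := by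
    exact_mod_cast ssgt_aux_pow d hd
  push_cast at h1
  linarith

/-- Each factor is at least 1. -/
lemma ssgt_aux_factor_one (q d : ℕ) (hq : 2 ≤ q) (hd : 1 ≤ d) :
    (1 : ℚ) ≤ (q : ℚ) ^ d - 1 := by
  have h1 : ((2 : ℕ) : ℚ) ^ d ≤ (q : ℚ) ^ d := by
    apply pow_le_pow_left₀ (by norm_num)
    exact_mod_cast hq
  have h2 : (2 : ℚ) ≤ ((2:ℕ) : ℚ) ^ d := by
    push_cast
    calc (2:ℚ) = 2 ^ 1 := by norm_num
    _ ≤ 2 ^ d := by apply pow_le_pow_right₀ (by norm_num) hd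
  linarith

/-- Combinatorial counting bound. -/
lemma ssgt_count_bound {P : Type*} [DecidableEq P] (q : ℕ) (deg : P → ℕ)
    (hdeg : ∀ x, 1 ≤ deg x) (T : Finset P)
    (hcount : ∀ k, (T.filter (fun x => deg x = k)).card ≤ q ^ k) :
    3 * T.card + ∑ x ∈ T, deg x
      ≤ 21 * (q + q ^ 2 + q ^ 3 + q ^ 4) + 3 * ∑ x ∈ T, (deg x - 2) := by
  have hsum : 3 * T.card + ∑ x ∈ T, deg x = ∑ x ∈ T, (3 + deg x) := by
    rw [Finset.sum_add_distrib, Finset.sum_const, smul_eq_mul, mul_comm]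
  rw [hsum]
  have hsplit := Finset.sum_filter_add_sum_filter_not T (fun x => deg x ≤ 4)
    (fun x => 3 + deg x)
  set A := T.filter (fun x => deg x ≤ 4) with hA
  set B := T.filter (fun x => ¬ deg x ≤ 4) with hB
  -- bound the A part
  have hAcard : A.card ≤ q + q ^ 2 + q ^ 3 + q ^ 4 := by
    have hsub : A ⊆ (Finset.Icc 1 4).biUnion (fun k => T.filter (fun x => deg x = k)) := by
      intro x hx
      rw [hA, Finset.mem_filter] at hx
      rw [Finset.mem_biUnion]
      exact ⟨deg x, Finset.mem_Icc.mpr ⟨hdeg x, hx.2⟩,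
        Finset.mem_filter.mpr ⟨hx.1, rfl⟩⟩
    calc A.card ≤ ((Finset.Icc 1 4).biUnion
          (fun k => T.filter (fun x => deg x = k))).card := Finset.card_le_card hsub
      _ ≤ ∑ k ∈ Finset.Icc 1 4, (T.filter (fun x => deg x = k)).card :=
          Finset.card_biUnion_le
      _ ≤ ∑ k ∈ Finset.Icc 1 4, q ^ k := Finset.sum_le_sum (fun k _ => hcount k)
      _ = q + q ^ 2 + q ^ 3 + q ^ 4 := by
          rw [show Finset.Icc 1 4 = {1, 2, 3, 4} from rfl]
          simp [Finset.sum_insert, pow_one]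
          ring
  have hApart : ∑ x ∈ A, (3 + deg x) ≤ 7 * A.card := by
    calc ∑ x ∈ A, (3 + deg x) ≤ ∑ x ∈ A, 7 := by
          apply Finset.sum_le_sum
          intro x hx
          rw [hA, Finset.mem_filter] at hx
          omega
      _ = 7 * A.card := by rw [Finset.sum_const, smul_eq_mul, mul_comm]
  have hBpart : ∑ x ∈ B, (3 + deg x) ≤ 3 * ∑ x ∈ T, (deg x - 2) := by
    calc ∑ x ∈ B, (3 + deg x) ≤ ∑ x ∈ B, 3 * (deg x - 2) := by
          apply Finset.sum_le_sum
          intro x hx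
          rw [hB, Finset.mem_filter] at hx
          omega
      _ ≤ ∑ x ∈ T, 3 * (deg x - 2) := by
          apply Finset.sum_le_sum_of_subset
          exact Finset.filter_subset _ _
      _ = 3 * ∑ x ∈ T, (deg x - 2) := by rw [Finset.mul_sum]
  calc ∑ x ∈ T, (3 + deg x) = ∑ x ∈ A, (3 + deg x) + ∑ x ∈ B, (3 + deg x) := hsplit.symm
    _ ≤ 7 * A.card + 3 * ∑ x ∈ T, (deg x - 2) := by omega
    _ ≤ 21 * (q + q ^ 2 + q ^ 3 + q ^ 4) + 3 * ∑ x ∈ T, (deg x - 2) := by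
        have := hAcard; omega

/-- Asymptotic optimality (Theorem 5.1): with `o` of degree 1, letting
`S(R)` be the number of supersingular points and `g(R)` the genus, for any
sequence of even-cardinality sets `R_n` of places (at most `q^k` places of each
degree `k`) with `deg 𝔯 = ∑_{x∈R_n} deg x → ∞`, we have `S(R_n)/g(R_n) → q - 1`. -/
theorem supersingular_over_genus_tendsto
    (q : ℕ) (hq : 2 ≤ q) (P : Type*) [DecidableEq P]
    (deg : P → ℕ) (hdeg : ∀ x, 1 ≤ deg x)
    (R : ℕ → Finset P)
    (hcount : ∀ n k, ((R n).filter (fun x => deg x = k)).card ≤ q ^ k)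
    (heven : ∀ n, Even (R n).card) (hne : ∀ n, (R n).Nonempty)
    (htend : Filter.Tendsto (fun n => ∑ x ∈ R n, deg x) Filter.atTop Filter.atTop)
    (e : ℕ → ℚ)
    (he1 : ∀ n, (∀ x ∈ R n, Odd (deg x)) → e n = 1)
    (he0 : ∀ n, (¬ ∀ x ∈ R n, Odd (deg x)) → e n = 0)
    (S g : ℕ → ℚ)
    (hS : ∀ n, S n = ((q : ℚ) - 1) * (∏ x ∈ R n, ((q : ℚ) ^ (deg x) - 1))
            / ((q : ℚ) ^ 2 - 1)
          + ((q : ℚ) / ((q : ℚ) + 1)) * 2 ^ (R n).card * e n)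
    (hg : ∀ n, g n = 1 + ((∏ x ∈ R n, ((q : ℚ) ^ (deg x) - 1))
            - (q : ℚ) * ((q : ℚ) - 1) * 2 ^ ((R n).card - 1) * e n)
            / ((q : ℚ) ^ 2 - 1)) :
    Filter.Tendsto (fun n => S n / g n) Filter.atTop (nhds ((q : ℚ) - 1)) := by
  classical
  have hq2 : (2 : ℚ) ≤ (q : ℚ) := by exact_mod_cast hq
  -- abbreviations
  set Pr : ℕ → ℚ := fun n => ∏ x ∈ R n, ((q : ℚ) ^ (deg x) - 1) with hPr
  set D : ℕ → ℕ := fun n => ∑ x ∈ R n, deg x with hD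
  set E : ℕ → ℕ := fun n => ∑ x ∈ R n, (deg x - 2) with hE
  set K : ℕ := 7 * (q + q ^ 2 + q ^ 3 + q ^ 4) with hK
  set b : ℕ → ℚ := fun n => 2 ^ (D n / 3) with hb
  -- positivity of products
  have hPr1 : ∀ n, (1 : ℚ) ≤ Pr n := by
    intro n
    rw [hPr]
    calc (1 : ℚ) = ∏ _x ∈ R n, 1 := by simp
    _ ≤ ∏ x ∈ R n, ((q : ℚ) ^ (deg x) - 1) := by
        apply Finset.prod_le_prod (fun x _ => by norm_num)
        intro x _
        exact ssgt_aux_factor_one q (deg x) hq (hdeg x)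
  have hPrpos : ∀ n, (0 : ℚ) < Pr n := fun n => lt_of_lt_of_le one_pos (hPr1 n)
  have hbpos : ∀ n, (0 : ℚ) < b n := fun n => by positivity
  -- e is between 0 and 1
  have he01 : ∀ n, 0 ≤ e n ∧ e n ≤ 1 := by
    intro n
    by_cases h : ∀ x ∈ R n, Odd (deg x)
    · rw [he1 n h]; norm_num
    · rw [he0 n h]; norm_num
  -- product lower bound
  have hPE : ∀ n, (2 : ℚ) ^ (E n) ≤ Pr n := by
    intro n
    rw [hPr, hE]
    calc (2 : ℚ) ^ (∑ x ∈ R n, (deg x - 2)) = ∏ x ∈ R n, (2 : ℚ) ^ (deg x - 2) := by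
          rw [Finset.prod_pow_eq_pow_sum]
    _ ≤ ∏ x ∈ R n, ((q : ℚ) ^ (deg x) - 1) := by
        apply Finset.prod_le_prod (fun x _ => by positivity)
        intro x _
        exact ssgt_aux_factor q (deg x) hq (hdeg x)
  -- key exponent inequality
  have hkey : ∀ n, (R n).card + D n / 3 ≤ K + E n := by
    intro n
    have h3 := ssgt_count_bound q deg hdeg (R n) (hcount n)
    have h2 : 3 * (D n / 3) ≤ D n := Nat.mul_div_le _ _
    have hDn : D n = ∑ x ∈ R n, deg x := rfl
    have hEn : E n = ∑ x ∈ R n, (deg x - 2) := rfl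
    rw [← hDn, ← hEn] at h3
    have hKn : 3 * K = 21 * (q + q ^ 2 + q ^ 3 + q ^ 4) := by rw [hK]; ring
    omega
  -- key ratio bound
  have hratio : ∀ n, (2 : ℚ) ^ ((R n).card) / Pr n ≤ 2 ^ K / b n := by
    intro n
    rw [div_le_div_iff₀ (hPrpos n) (hbpos n)]
    calc (2 : ℚ) ^ (R n).card * b n = 2 ^ ((R n).card + D n / 3) := by
          rw [hb, pow_add]
    _ ≤ 2 ^ (K + E n) := by
        apply pow_le_pow_right₀ (by norm_num) (hkey n)
    _ = 2 ^ K * 2 ^ (E n) := pow_add 2 K (E n)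
    _ ≤ 2 ^ K * Pr n := by
        apply mul_le_mul_of_nonneg_left (hPE n) (by positivity)
  -- b tends to infinity
  have hD3 : Tendsto (fun n => D n / 3) atTop atTop := by
    rw [tendsto_atTop] at htend ⊢
    intro c
    filter_upwards [htend (3 * c)] with n hn
    have : 3 * c ≤ D n := hn
    omega
  have hbtop : Tendsto b atTop atTop :=
    (tendsto_pow_atTop_atTop_of_one_lt (by norm_num : (1 : ℚ) < 2)).comp hD3
  have hzero : ∀ C : ℚ, Tendsto (fun n => C / b n) atTop (nhds 0) := by
    intro C
    exact Tendsto.div_atTop tendsto_const_nhds hbtop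
  -- the three error terms
  set u : ℕ → ℚ := fun n => (q : ℚ) * 2 ^ ((R n).card) * e n / Pr n with hu
  set v : ℕ → ℚ := fun n => ((q : ℚ) ^ 2 - 1) / Pr n with hv
  set w : ℕ → ℚ := fun n => (q : ℚ) * ((q : ℚ) - 1) * 2 ^ ((R n).card - 1) * e n / Pr n
    with hw
  have hu0 : Tendsto u atTop (nhds 0) := by
    apply tendsto_of_tendsto_of_tendsto_of_le_of_le (g := fun _ => (0 : ℚ))
      (h := fun n => (q : ℚ) * 2 ^ K / b n) tendsto_const_nhds (hzero _)
    · intro n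
      dsimp only
      have := (he01 n).1
      have := (hPrpos n).le
      positivity
    · intro n
      have h1 : u n = ((q : ℚ) * e n) * (2 ^ ((R n).card) / Pr n) := by
        rw [hu]; ring
      rw [h1]
      have h2 : (q : ℚ) * e n ≤ (q : ℚ) * 1 := by
        apply mul_le_mul_of_nonneg_left (he01 n).2 (by linarith)
      calc ((q : ℚ) * e n) * (2 ^ ((R n).card) / Pr n)
          ≤ ((q : ℚ) * 1) * (2 ^ K / b n) := by
            apply mul_le_mul h2 (hratio n) (div_nonneg (by positivity) (hPrpos n).le) (by linarith)
      _ = (q : ℚ) * 2 ^ K / b n := by ring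
  have hv0 : Tendsto v atTop (nhds 0) := by
    apply tendsto_of_tendsto_of_tendsto_of_le_of_le (g := fun _ => (0 : ℚ))
      (h := fun n => ((q : ℚ) ^ 2 - 1) * 2 ^ K / b n) tendsto_const_nhds (hzero _)
    · intro n
      dsimp only
      have := (hPrpos n).le
      have : (1 : ℚ) ≤ (q : ℚ) ^ 2 := by nlinarith
      apply div_nonneg (by linarith) (hPrpos n).le
    · intro n
      have h1 : v n = ((q : ℚ) ^ 2 - 1) * (1 / Pr n) := by
        rw [hv]; ring
      rw [h1]
      have hq21 : (0 : ℚ) ≤ (q : ℚ) ^ 2 - 1 := by nlinarith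
      have h2 : (1 : ℚ) / Pr n ≤ 2 ^ ((R n).card) / Pr n := by
        have h21 : (1 : ℚ) ≤ 2 ^ ((R n).card) := one_le_pow₀ (by norm_num)
        gcongr
        exact (hPrpos n).le
      calc ((q : ℚ) ^ 2 - 1) * (1 / Pr n)
          ≤ ((q : ℚ) ^ 2 - 1) * (2 ^ K / b n) := by
            apply mul_le_mul_of_nonneg_left (le_trans h2 (hratio n)) hq21
      _ = ((q : ℚ) ^ 2 - 1) * 2 ^ K / b n := by ring
  have hw0 : Tendsto w atTop (nhds 0) := by
    apply tendsto_of_tendsto_of_tendsto_of_le_of_le (g := fun _ => (0 : ℚ))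
      (h := fun n => (q : ℚ) * (q : ℚ) * 2 ^ K / b n) tendsto_const_nhds (hzero _)
    · intro n
      dsimp only
      have := (he01 n).1
      have h1 : (0 : ℚ) ≤ (q : ℚ) - 1 := by linarith
      have := (hPrpos n).le
      positivity
    · intro n
      have h1 : w n = (((q : ℚ) * ((q : ℚ) - 1)) * e n * 2 ^ ((R n).card - 1)) / Pr n := by
        rw [hw]; ring
      rw [h1]
      have h2 : ((q : ℚ) * ((q : ℚ) - 1)) * e n * 2 ^ ((R n).card - 1)
          ≤ ((q : ℚ) * (q : ℚ)) * 1 * 2 ^ ((R n).card) := by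
        apply mul_le_mul
        · apply mul_le_mul
          · apply mul_le_mul_of_nonneg_left (by linarith) (by linarith)
          · exact (he01 n).2
          · exact (he01 n).1
          · nlinarith
        · apply pow_le_pow_right₀ (by norm_num) (Nat.sub_le _ _)
        · positivity
        · nlinarith
      calc (((q : ℚ) * ((q : ℚ) - 1)) * e n * 2 ^ ((R n).card - 1)) / Pr n
          ≤ (((q : ℚ) * (q : ℚ)) * 1 * 2 ^ ((R n).card)) / Pr n := by
            apply div_le_div_of_nonneg_right h2 (hPrpos n).le
      _ = ((q : ℚ) * (q : ℚ)) * (2 ^ ((R n).card) / Pr n) := by ring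
      _ ≤ ((q : ℚ) * (q : ℚ)) * (2 ^ K / b n) := by
            apply mul_le_mul_of_nonneg_left (hratio n) (by positivity)
      _ = (q : ℚ) * (q : ℚ) * 2 ^ K / b n := by ring
  -- limits of numerator and denominator
  have hden : Tendsto (fun n => 1 + v n - w n) atTop (nhds 1) := by
    have h := ((tendsto_const_nhds (x := (1 : ℚ)) (f := atTop)).add hv0).sub hw0
    simpa using h
  have hnum : Tendsto (fun n => ((q : ℚ) - 1) * (1 + u n)) atTop
      (nhds (((q : ℚ) - 1) * (1 + 0))) := by
    exact (tendsto_const_nhds.add hu0).const_mul _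
  have hF : Tendsto (fun n => ((q : ℚ) - 1) * (1 + u n) / (1 + v n - w n)) atTop
      (nhds ((q : ℚ) - 1)) := by
    have h := hnum.div hden one_ne_zero
    simpa [Pi.div_def] using h
  -- eventual equality
  have hBne : ((q : ℚ) ^ 2 - 1) ≠ 0 := by nlinarith
  have hq1ne : (q : ℚ) + 1 ≠ 0 := by positivity
  have heq : ∀ᶠ n in atTop, S n / g n
      = ((q : ℚ) - 1) * (1 + u n) / (1 + v n - w n) := by
    filter_upwards [hden.eventually_ne one_ne_zero] with n hne0
    have hPrne : Pr n ≠ 0 := (hPrpos n).ne'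
    have hS' : S n = (((q : ℚ) - 1) * (1 + u n)) * (Pr n / ((q : ℚ) ^ 2 - 1)) := by
      rw [hS n, hu]
      field_simp
      ring
    have hg' : g n = (1 + v n - w n) * (Pr n / ((q : ℚ) ^ 2 - 1)) := by
      rw [hg n, hv, hw]
      field_simp
      ring
    rw [hS', hg', mul_div_mul_right _ _ (div_ne_zero hPrne hBne)]
  exact hF.congr' (heq.mono fun n h => h.symm)
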